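/- arXiv:1811.06242 — 2 statements merged into one kernel-verified Lean document; each statement's English description precedes it below -/
import Mathlib

section
/- Let e_u ∈ V_h and e_p ∈ Q_h satisfy the error equation 2μ⟨ε(e_u), ε(v)⟩ + λ⟨∇·e_u, ∇·v⟩ = α⟨e_p, ∇·v⟩ for all v ∈ V_h. Then 2μ‖ε(e_u)‖² + λ‖∇·e_u‖² ≤ (α²/K_dr)‖e_p‖², where K_dr > 0 is any constant with 2μ‖ε(v)‖² + λ‖∇·v‖² ≥ K_dr‖∇·v‖² for all v ∈ V_h. -/
open RealInnerProductSpace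

/-- Displacement error bound of the fixed-stress splitting: if the iteration errors
`e_u ∈ V_h`, `e_p ∈ Q_h` satisfy the elasticity error equation
`2μ⟨ε(e_u), ε(v)⟩ + λ⟨∇·e_u, ∇·v⟩ = α⟨e_p, ∇·v⟩` for all `v ∈ V_h`, then
`2μ‖ε(e_u)‖² + λ‖∇·e_u‖² ≤ (α²/K_dr)‖e_p‖²`, where `K_dr > 0` is a coercivity constant of
the elastic energy with respect to `‖∇·(·)‖²` on `V_h`. -/
theorem fixed_stress_displacement_error_bound
    {V Q E : Type*} [AddCommGroup V] [Module ℝ V]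
    [NormedAddCommGroup Q] [InnerProductSpace ℝ Q]
    [NormedAddCommGroup E] [InnerProductSpace ℝ E]
    (eps : V →ₗ[ℝ] E) (div : V →ₗ[ℝ] Q)
    (μ lam α Kdr : ℝ) (hμ : 0 < μ) (hlam : 0 < lam) (hα : 0 < α) (hK : 0 < Kdr)
    (Vh : Submodule ℝ V) (Qh : Submodule ℝ Q)
    (hcoerc : ∀ v ∈ Vh, Kdr * ‖div v‖ ^ 2 ≤ 2 * μ * ‖eps v‖ ^ 2 + lam * ‖div v‖ ^ 2)
    (eu : V) (ep : Q) (heu : eu ∈ Vh) (hep : ep ∈ Qh)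
    (herr : ∀ v ∈ Vh,
      2 * μ * ⟪eps eu, eps v⟫ + lam * ⟪div eu, div v⟫ = α * ⟪ep, div v⟫) :
    2 * μ * ‖eps eu‖ ^ 2 + lam * ‖div eu‖ ^ 2 ≤ α ^ 2 / Kdr * ‖ep‖ ^ 2 := by
  set E0 := 2 * μ * ‖eps eu‖ ^ 2 + lam * ‖div eu‖ ^ 2 with hE0
  have hE0nonneg : 0 ≤ E0 := by positivity
  have heq : E0 = α * ⟪ep, div eu⟫ := by
    have h := herr eu heu
    rw [real_inner_self_eq_norm_sq, real_inner_self_eq_norm_sq] at h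
    linarith [h]
  have hcau : |⟪ep, div eu⟫| ≤ ‖ep‖ * ‖div eu‖ := abs_real_inner_le_norm ep (div eu)
  have hco : Kdr * ‖div eu‖ ^ 2 ≤ E0 := hcoerc eu heu
  have hsq : E0 ^ 2 ≤ α ^ 2 * ‖ep‖ ^ 2 * ‖div eu‖ ^ 2 := by
    have h1 : E0 ≤ α * (‖ep‖ * ‖div eu‖) := by
      rw [heq]
      exact mul_le_mul_of_nonneg_left (le_trans (le_abs_self _) hcau) hα.le
    nlinarith [norm_nonneg ep, norm_nonneg (div eu)]
  rcases eq_or_lt_of_le hE0nonneg with h0 | h0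
  · have : 0 ≤ α ^ 2 / Kdr * ‖ep‖ ^ 2 := by positivity
    linarith
  · rw [div_mul_eq_mul_div, le_div_iff₀ hK]
    nlinarith [mul_le_mul_of_nonneg_right hsq hK.le,
      mul_le_mul_of_nonneg_left hco (show (0:ℝ) ≤ α ^ 2 * ‖ep‖ ^ 2 by positivity)]
end

section
/- Suppose the inf-sup lifting property holds: for every p ∈ Q_h there is v ∈ V_h with ⟨∇·v, q⟩ = ⟨p, q⟩ for all q ∈ Q_h and 2μ‖ε(v)‖² + λ‖∇·v‖² ≤ β‖p‖². If e_u ∈ V_h, e_p ∈ Q_h satisfy 2μ⟨ε(e_u), ε(w)⟩ + λ⟨∇·e_u, ∇·w⟩ = α⟨e_p, ∇·w⟩ for all w ∈ V_h, then (α²/β)‖e_p‖² ≤ 2μ‖ε(e_u)‖² + λ‖∇·e_u‖². -/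
open RealInnerProductSpace

/-- Lower bound of the pressure error by the elastic energy of the displacement error:
if the inf-sup lifting property holds (every `p ∈ Q_h` admits `v ∈ V_h` with
`⟨∇·v, q⟩ = ⟨p, q⟩` for all `q ∈ Q_h` and `2μ‖ε(v)‖² + λ‖∇·v‖² ≤ β‖p‖²`), and
`e_u ∈ V_h`, `e_p ∈ Q_h` satisfy the elasticity error equation, then
`(α²/β)‖e_p‖² ≤ 2μ‖ε(e_u)‖² + λ‖∇·e_u‖²`. -/
theorem pressure_error_lower_bound
    {V Q E : Type*} [AddCommGroup V] [Module ℝ V]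
    [NormedAddCommGroup Q] [InnerProductSpace ℝ Q]
    [NormedAddCommGroup E] [InnerProductSpace ℝ E]
    (eps : V →ₗ[ℝ] E) (div : V →ₗ[ℝ] Q)
    (μ lam α β : ℝ) (hμ : 0 < μ) (hlam : 0 < lam) (hα : 0 < α) (hβ : 0 < β)
    (Vh : Submodule ℝ V) (Qh : Submodule ℝ Q)
    (hlift : ∀ p ∈ Qh, ∃ v ∈ Vh,
      (∀ q ∈ Qh, ⟪div v, q⟫ = ⟪p, q⟫) ∧
      2 * μ * ‖eps v‖ ^ 2 + lam * ‖div v‖ ^ 2 ≤ β * ‖p‖ ^ 2)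
    (eu : V) (ep : Q) (heu : eu ∈ Vh) (hep : ep ∈ Qh)
    (herr : ∀ w ∈ Vh,
      2 * μ * ⟪eps eu, eps w⟫ + lam * ⟪div eu, div w⟫ = α * ⟪ep, div w⟫) :
    α ^ 2 / β * ‖ep‖ ^ 2 ≤ 2 * μ * ‖eps eu‖ ^ 2 + lam * ‖div eu‖ ^ 2 := by
  obtain ⟨v, hv, hortho, henergy⟩ := hlift ep hep
  have hvp : ⟪div v, ep⟫ = ‖ep‖ ^ 2 := by
    rw [hortho ep hep, real_inner_self_eq_norm_sq]
  have hkey : 2 * μ * ⟪eps eu, eps v⟫ + lam * ⟪div eu, div v⟫ = α * ‖ep‖ ^ 2 := by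
    rw [herr v hv, ← hvp, real_inner_comm]
  have cs1 : ⟪eps eu, eps v⟫ ≤ ‖eps eu‖ * ‖eps v‖ := real_inner_le_norm _ _
  have cs2 : ⟪div eu, div v⟫ ≤ ‖div eu‖ * ‖div v‖ := real_inner_le_norm _ _
  set A := 2 * μ * ‖eps eu‖ ^ 2 + lam * ‖div eu‖ ^ 2 with hA
  have hA0 : 0 ≤ A := by positivity
  have hsq : (α * ‖ep‖ ^ 2) ^ 2 ≤ A * (β * ‖ep‖ ^ 2) := by
    have hnn : 0 ≤ α * ‖ep‖ ^ 2 := by positivity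
    have step1 : α * ‖ep‖ ^ 2 ≤ 2 * μ * (‖eps eu‖ * ‖eps v‖) + lam * (‖div eu‖ * ‖div v‖) := by
      nlinarith [cs1, cs2]
    have step1' : 0 ≤ 2 * μ * (‖eps eu‖ * ‖eps v‖) + lam * (‖div eu‖ * ‖div v‖) :=
      le_trans hnn step1
    have step2 : (2 * μ * (‖eps eu‖ * ‖eps v‖) + lam * (‖div eu‖ * ‖div v‖)) ^ 2 ≤
        A * (2 * μ * ‖eps v‖ ^ 2 + lam * ‖div v‖ ^ 2) := by
      rw [hA]
      nlinarith [sq_nonneg (‖eps eu‖ * ‖div v‖ - ‖div eu‖ * ‖eps v‖), mul_pos hμ hlam]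
    have h1 : (α * ‖ep‖ ^ 2) ^ 2 ≤ A * (2 * μ * ‖eps v‖ ^ 2 + lam * ‖div v‖ ^ 2) :=
      le_trans (pow_le_pow_left₀ hnn step1 2) step2
    calc (α * ‖ep‖ ^ 2) ^ 2 ≤ A * (2 * μ * ‖eps v‖ ^ 2 + lam * ‖div v‖ ^ 2) := h1
      _ ≤ A * (β * ‖ep‖ ^ 2) := by
          exact mul_le_mul_of_nonneg_left henergy hA0
  rcases eq_or_lt_of_le (norm_nonneg ep) with h0 | h0
  · rw [← h0]
    simpa using hA0
  · rw [div_mul_eq_mul_div, div_le_iff₀ hβ]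
    have hep2 : 0 < ‖ep‖ ^ 2 := by positivity
    rw [← mul_le_mul_iff_of_pos_right hep2]
    nlinarith [hsq]
end
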